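/- Let ĝ = V^{-1} g be two conformally related metrics, K̂_{ab} a Killing tensor for ĝ with trace-free part k_{ab}, and suppose there is a Killing tensor for g also with trace-free part k_{ab}. Then the 1-form K̂^b{}_a (dV)_b is closed: d(K̂^b{}_a(dV)_b dx^a) = 0 (the Bertrand–Darboux / dKdV equation). -/

import Mathlib

noncomputable section
open scoped BigOperators

/-- Partial derivative `∂ᵢ f` of a real-valued function on the chart `Fin n → ℝ`. -/
def pd {n : ℕ} (i : Fin n) (f : (Fin n → ℝ) → ℝ) (x : Fin n → ℝ) : ℝ :=
  fderiv ℝ f x (fun j => if j = i then (1 : ℝ) else 0)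

/-- A pseudo-Riemannian metric on the global chart `Fin n → ℝ`. -/
structure PseudoRiemMetric (n : ℕ) where
  g : (Fin n → ℝ) → Fin n → Fin n → ℝ
  ginv : (Fin n → ℝ) → Fin n → Fin n → ℝ
  symm : ∀ x a b, g x a b = g x b a
  invl : ∀ x a b, (∑ c, ginv x a c * g x c b) = if a = b then (1 : ℝ) else 0
  smooth_g : ∀ a b, ContDiff ℝ (⊤ : ℕ∞) fun x => g x a b
  smooth_ginv : ∀ a b, ContDiff ℝ (⊤ : ℕ∞) fun x => ginv x a b

namespace PseudoRiemMetric

variable {n : ℕ} (M : PseudoRiemMetric n)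

/-- Christoffel symbols `Γ^a_{bc}` of the Levi-Civita connection. -/
def Γ (x : Fin n → ℝ) (a b c : Fin n) : ℝ :=
  (1 / 2) * ∑ d, M.ginv x a d *
    (pd b (fun y => M.g y d c) x + pd c (fun y => M.g y d b) x - pd d (fun y => M.g y b c) x)

/-- Covariant derivative `∇_a k_b` of a 1-form. -/
def covD1 (k : (Fin n → ℝ) → Fin n → ℝ) (x : Fin n → ℝ) (a b : Fin n) : ℝ :=
  pd a (fun y => k y b) x - ∑ c, M.Γ x c a b * k x c

/-- Covariant derivative `∇_a v^b` of a vector field. -/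
def covDvec (v : (Fin n → ℝ) → Fin n → ℝ) (x : Fin n → ℝ) (a b : Fin n) : ℝ :=
  pd a (fun y => v y b) x + ∑ c, M.Γ x b a c * v x c

/-- Covariant derivative `∇_a k_{bc}` of a covariant 2-tensor. -/
def covD2 (k : (Fin n → ℝ) → Fin n → Fin n → ℝ) (x : Fin n → ℝ) (a b c : Fin n) : ℝ :=
  pd a (fun y => k y b c) x - (∑ d, M.Γ x d a b * k x d c) - ∑ d, M.Γ x d a c * k x b d

/-- Divergence `∇_a v^a` of a vector field. -/
def divVec (v : (Fin n → ℝ) → Fin n → ℝ) (x : Fin n → ℝ) : ℝ :=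
  ∑ a, M.covDvec v x a a

/-- Laplacian `Δf = g^{ac} ∇_a ∇_c f` of a function. -/
def lap0 (f : (Fin n → ℝ) → ℝ) (x : Fin n → ℝ) : ℝ :=
  ∑ a, ∑ c, M.ginv x a c * M.covD1 (fun y b => pd b f y) x a c

/-- Laplacian `Δk_b = g^{ac} ∇_a ∇_c k_b` of a 1-form. -/
def lap1 (k : (Fin n → ℝ) → Fin n → ℝ) (x : Fin n → ℝ) (b : Fin n) : ℝ :=
  ∑ a, ∑ c, M.ginv x a c * M.covD2 (fun y p q => M.covD1 k y p q) x a c b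

/-- Riemann curvature `R_{ab}{}^c{}_d`, with the convention
`R_{ab}{}^c{}_d X^d = ∇_a ∇_b X^c - ∇_b ∇_a X^c`. -/
def Riem (x : Fin n → ℝ) (a b c d : Fin n) : ℝ :=
  pd a (fun y => M.Γ y c b d) x - pd b (fun y => M.Γ y c a d) x
    + (∑ e, M.Γ x c a e * M.Γ x e b d) - ∑ e, M.Γ x c b e * M.Γ x e a d

/-- Ricci curvature `R_{bd} = R_{ab}{}^a{}_d`. -/
def Ricci (x : Fin n → ℝ) (b d : Fin n) : ℝ := ∑ a, M.Riem x a b a d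

/-- Scalar curvature. -/
def scal (x : Fin n → ℝ) : ℝ := ∑ b, ∑ d, M.ginv x b d * M.Ricci x b d

/-- Trace of the Schouten tensor, `J = Scal/(2(n-1))`. -/
def Jsc (x : Fin n → ℝ) : ℝ := (1 / (2 * ((n : ℝ) - 1))) * M.scal x

/-- Schouten tensor, `P_{ab} = (Ric_{ab} - J g_{ab})/(n-2)`. -/
def Schouten (x : Fin n → ℝ) (a b : Fin n) : ℝ :=
  (1 / ((n : ℝ) - 2)) * (M.Ricci x a b - M.Jsc x * M.g x a b)

end PseudoRiemMetric

namespace BD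

variable {n : ℕ}

def ev (i : Fin n) : Fin n → ℝ := fun j => if j = i then (1 : ℝ) else 0

lemma pd_eq (i : Fin n) (f : (Fin n → ℝ) → ℝ) (x : Fin n → ℝ) :
    pd i f x = fderiv ℝ f x (ev i) := rfl

def Sm (f : (Fin n → ℝ) → ℝ) : Prop := ContDiff ℝ (⊤ : ℕ∞) f

lemma Sm.diff {f : (Fin n → ℝ) → ℝ} (hf : Sm f) (x : Fin n → ℝ) :
    DifferentiableAt ℝ f x :=
  (hf.differentiable (by simp)).differentiableAt

lemma sm_const (c : ℝ) : Sm (fun _ : Fin n → ℝ => c) := contDiff_const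

lemma Sm.add {f g : (Fin n → ℝ) → ℝ} (hf : Sm f) (hg : Sm g) :
    Sm (fun y => f y + g y) := ContDiff.add hf hg

lemma Sm.mul {f g : (Fin n → ℝ) → ℝ} (hf : Sm f) (hg : Sm g) :
    Sm (fun y => f y * g y) := ContDiff.mul hf hg

lemma Sm.neg {f : (Fin n → ℝ) → ℝ} (hf : Sm f) : Sm (fun y => -(f y)) := ContDiff.neg hf

lemma Sm.sub {f g : (Fin n → ℝ) → ℝ} (hf : Sm f) (hg : Sm g) :
    Sm (fun y => f y - g y) := ContDiff.sub hf hg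

lemma Sm.inv {f : (Fin n → ℝ) → ℝ} (hf : Sm f) (h0 : ∀ x, f x ≠ 0) :
    Sm (fun y => (f y)⁻¹) := ContDiff.inv hf h0

lemma sm_sum {ι : Type*} (s : Finset ι) (f : ι → (Fin n → ℝ) → ℝ)
    (hf : ∀ i ∈ s, Sm (f i)) : Sm (fun y => ∑ i ∈ s, f i y) := ContDiff.sum hf

lemma Sm.pd {f : (Fin n → ℝ) → ℝ} (hf : Sm f) (i : Fin n) : Sm (fun y => pd i f y) := by
  have h1 : ContDiff ℝ (⊤ : ℕ∞) (fderiv ℝ f) := by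
    apply ContDiff.fderiv_right hf
    exact_mod_cast le_top
  exact h1.clm_apply contDiff_const

lemma pd_add {f g : (Fin n → ℝ) → ℝ} {x : Fin n → ℝ} (i : Fin n)
    (hf : DifferentiableAt ℝ f x) (hg : DifferentiableAt ℝ g x) :
    pd i (fun y => f y + g y) x = pd i f x + pd i g x := by
  simp [pd_eq, fderiv_fun_add hf hg]

lemma pd_const (i : Fin n) (c : ℝ) (x : Fin n → ℝ) : pd i (fun _ => c) x = 0 := by
  simp [pd_eq, fderiv_const]

lemma pd_mul {f g : (Fin n → ℝ) → ℝ} {x : Fin n → ℝ} (i : Fin n)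
    (hf : DifferentiableAt ℝ f x) (hg : DifferentiableAt ℝ g x) :
    pd i (fun y => f y * g y) x = pd i f x * g x + f x * pd i g x := by
  simp [pd_eq, fderiv_fun_mul hf hg]; ring

lemma pd_neg {f : (Fin n → ℝ) → ℝ} {x : Fin n → ℝ} (i : Fin n) :
    pd i (fun y => -(f y)) x = -pd i f x := by
  simp [pd_eq, fderiv_neg]

lemma pd_sub {f g : (Fin n → ℝ) → ℝ} {x : Fin n → ℝ} (i : Fin n)
    (hf : DifferentiableAt ℝ f x) (hg : DifferentiableAt ℝ g x) :
    pd i (fun y => f y - g y) x = pd i f x - pd i g x := by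
  simp [pd_eq, fderiv_fun_sub hf hg]

lemma pd_sum {ι : Type*} {x : Fin n → ℝ} (i : Fin n) (s : Finset ι)
    (f : ι → (Fin n → ℝ) → ℝ) (hf : ∀ j ∈ s, DifferentiableAt ℝ (f j) x) :
    pd i (fun y => ∑ j ∈ s, f j y) x = ∑ j ∈ s, pd i (f j) x := by
  simp [pd_eq, fderiv_fun_sum hf]

lemma pd_inv {f : (Fin n → ℝ) → ℝ} {x : Fin n → ℝ} (i : Fin n)
    (hf : DifferentiableAt ℝ f x) (h0 : ∀ y, f y ≠ 0) :
    pd i (fun y => (f y)⁻¹) x = -(pd i f x) / (f x) ^ 2 := by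
  have hinv : DifferentiableAt ℝ (fun y => (f y)⁻¹) x := hf.inv (h0 x)
  have h1 : pd i (fun y => f y * (f y)⁻¹) x = 0 := by
    have : (fun y => f y * (f y)⁻¹) = fun _ => (1 : ℝ) := by
      funext y; field_simp [h0 y]
    rw [this, pd_const]
  rw [pd_mul i hf hinv] at h1
  have hfx := h0 x
  field_simp at h1 ⊢
  linarith [h1]

lemma pd_comm {f : (Fin n → ℝ) → ℝ} (hf : Sm f) (x : Fin n → ℝ) (i j : Fin n) :
    pd i (fun y => pd j f y) x = pd j (fun y => pd i f y) x := by
  have hdf : ∀ y, HasFDerivAt f (fderiv ℝ f y) y := fun y => (hf.diff y).hasFDerivAt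
  have h1 : ContDiff ℝ (⊤ : ℕ∞) (fderiv ℝ f) := by
    apply ContDiff.fderiv_right hf
    exact_mod_cast le_top
  have hdf2 : HasFDerivAt (fderiv ℝ f) (fderiv ℝ (fderiv ℝ f) x) x :=
    ((h1.differentiable (by simp)).differentiableAt).hasFDerivAt
  have hsymm := second_derivative_symmetric hdf hdf2 (ev i) (ev j)
  have key : ∀ v w : Fin n → ℝ,
      fderiv ℝ (fun y => fderiv ℝ f y w) x v = fderiv ℝ (fderiv ℝ f) x v w := by
    intro v w
    rw [fderiv_clm_apply ((h1.differentiable (by simp)).differentiableAt)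
      (differentiableAt_const w)]
    simp
  simp only [pd_eq]
  rw [key (ev i) (ev j), key (ev j) (ev i)]
  exact hsymm.symm ▸ rfl

variable (M : PseudoRiemMetric n) (x : Fin n → ℝ)

lemma invr (a b : Fin n) : (∑ c, M.g x a c * M.ginv x c b) = if a = b then (1 : ℝ) else 0 := by
  have h : (Matrix.of (M.ginv x)) * (Matrix.of (M.g x)) = 1 := by
    ext a b
    simpa [Matrix.mul_apply, Matrix.one_apply] using M.invl x a b
  have h2 : (Matrix.of (M.g x)) * (Matrix.of (M.ginv x)) = 1 := mul_eq_one_comm.mp h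
  have := congrFun (congrFun h2 a) b
  simpa [Matrix.mul_apply, Matrix.one_apply] using this

lemma ginv_symm (a b : Fin n) : M.ginv x a b = M.ginv x b a := by
  set G := Matrix.of (M.g x)
  set Gi := Matrix.of (M.ginv x)
  have h : Gi * G = 1 := by
    ext a b; simpa [Matrix.mul_apply, Matrix.one_apply, G, Gi] using M.invl x a b
  have h2 : G * Gi = 1 := mul_eq_one_comm.mp h
  have hGt : G.transpose = G := by
    ext a b; simp [Matrix.transpose_apply, G, Matrix.of_apply]; exact (M.symm x b a)
  have h3 : Gi.transpose * G = 1 := by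
    have := congrArg Matrix.transpose h2
    rw [Matrix.transpose_mul, hGt, Matrix.transpose_one] at this
    exact this
  have h4 : Gi.transpose = Gi := by
    calc Gi.transpose = Gi.transpose * (G * Gi) := by rw [h2, Matrix.mul_one]
    _ = (Gi.transpose * G) * Gi := by rw [Matrix.mul_assoc]
    _ = Gi := by rw [h3, Matrix.one_mul]
  have := congrFun (congrFun h4 b) a
  simpa [Matrix.transpose_apply, Gi, Matrix.of_apply] using this

/-- Contraction of the inverse metric against a `d`-indexed family, then the metric. -/
lemma dsum_contract (A : Fin n → ℝ) (c : Fin n) :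
    ∑ d, (∑ e, M.ginv x d e * A e) * M.g x d c = A c := by
  have step : ∀ e, (∑ d, M.ginv x d e * M.g x d c) = if e = c then (1:ℝ) else 0 := by
    intro e
    have : ∑ d, M.ginv x d e * M.g x d c = ∑ d, M.ginv x e d * M.g x d c := by
      apply Finset.sum_congr rfl
      intro d _
      rw [ginv_symm M x d e]
    rw [this, M.invl x e c]
  calc ∑ d, (∑ e, M.ginv x d e * A e) * M.g x d c
      = ∑ d, ∑ e, M.ginv x d e * A e * M.g x d c := by
        simp [Finset.sum_mul]
    _ = ∑ e, ∑ d, M.ginv x d e * A e * M.g x d c := Finset.sum_comm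
    _ = ∑ e, A e * ∑ d, M.ginv x d e * M.g x d c := by
        apply Finset.sum_congr rfl; intro e _
        rw [Finset.mul_sum]; apply Finset.sum_congr rfl; intro d _; ring
    _ = ∑ e, A e * (if e = c then (1:ℝ) else 0) := by
        apply Finset.sum_congr rfl; intro e _; rw [step e]
    _ = A c := by simp

lemma pdg_symm (i a b : Fin n) :
    pd i (fun y => M.g y a b) x = pd i (fun y => M.g y b a) x := by
  congr 1; funext y; exact M.symm y a b

/-- Metric compatibility: `∇ g = 0`. -/
lemma covD2_g_zero (a b c : Fin n) : M.covD2 M.g x a b c = 0 := by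
  unfold PseudoRiemMetric.covD2
  have h1 : ∑ d, M.Γ x d a b * M.g x d c
      = (1/2) * (pd a (fun y => M.g y c b) x + pd b (fun y => M.g y c a) x
          - pd c (fun y => M.g y a b) x) := by
    unfold PseudoRiemMetric.Γ
    calc ∑ d, ((1/2) * ∑ e, M.ginv x d e *
            (pd a (fun y => M.g y e b) x + pd b (fun y => M.g y e a) x
              - pd e (fun y => M.g y a b) x)) * M.g x d c
        = (1/2) * ∑ d, (∑ e, M.ginv x d e *
            (pd a (fun y => M.g y e b) x + pd b (fun y => M.g y e a) x
              - pd e (fun y => M.g y a b) x)) * M.g x d c := by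
          rw [Finset.mul_sum]; apply Finset.sum_congr rfl; intro d _; ring
      _ = (1/2) * (pd a (fun y => M.g y c b) x + pd b (fun y => M.g y c a) x
            - pd c (fun y => M.g y a b) x) := by
          rw [dsum_contract M x (fun e => pd a (fun y => M.g y e b) x
            + pd b (fun y => M.g y e a) x - pd e (fun y => M.g y a b) x) c]
  have h2 : ∑ d, M.Γ x d a c * M.g x b d
      = (1/2) * (pd a (fun y => M.g y b c) x + pd c (fun y => M.g y b a) x
          - pd b (fun y => M.g y a c) x) := by
    have hb : ∀ d, M.g x b d = M.g x d b := fun d => M.symm x b d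
    unfold PseudoRiemMetric.Γ
    calc ∑ d, ((1/2) * ∑ e, M.ginv x d e *
            (pd a (fun y => M.g y e c) x + pd c (fun y => M.g y e a) x
              - pd e (fun y => M.g y a c) x)) * M.g x b d
        = (1/2) * ∑ d, (∑ e, M.ginv x d e *
            (pd a (fun y => M.g y e c) x + pd c (fun y => M.g y e a) x
              - pd e (fun y => M.g y a c) x)) * M.g x d b := by
          rw [Finset.mul_sum]; apply Finset.sum_congr rfl; intro d _; rw [hb d]; ring
      _ = (1/2) * (pd a (fun y => M.g y b c) x + pd c (fun y => M.g y b a) x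
            - pd b (fun y => M.g y a c) x) := by
          rw [dsum_contract M x (fun e => pd a (fun y => M.g y e c) x
            + pd c (fun y => M.g y e a) x - pd e (fun y => M.g y a c) x) b]
  rw [h1, h2, pdg_symm M x a c b, pdg_symm M x b c a, pdg_symm M x c a b,
    pdg_symm M x a b c]
  ring

end BD
namespace BD
variable {n : ℕ}

section Conf

variable (M M' : PseudoRiemMetric n) (V : (Fin n → ℝ) → ℝ)

/-- Christoffel difference tensor for `ĝ = V⁻¹ g`. -/
def ΔΓ (x : Fin n → ℝ) (a b c : Fin n) : ℝ :=
  -(1 / (2 * V x)) * ((if a = b then (1:ℝ) else 0) * pd c V x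
    + (if a = c then (1:ℝ) else 0) * pd b V x
    - M.g x b c * ∑ e, M.ginv x a e * pd e V x)

variable (hV : ContDiff ℝ (⊤ : ℕ∞) V) (hVpos : ∀ x, 0 < V x)
  (hconf : ∀ x a b, M'.g x a b = (V x)⁻¹ * M.g x a b)

include hVpos hconf in
lemma ginv_conf (x : Fin n → ℝ) (a b : Fin n) : M'.ginv x a b = V x * M.ginv x a b := by
  have hVne : V x ≠ 0 := ne_of_gt (hVpos x)
  have h1 : ∀ a b : Fin n, (∑ c, M'.ginv x a c * M.g x c b)
      = if a = b then V x else 0 := by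
    intro a b
    have h0 := M'.invl x a b
    have hr : ∑ c, M'.ginv x a c * M'.g x c b
        = (V x)⁻¹ * ∑ c, M'.ginv x a c * M.g x c b := by
      rw [Finset.mul_sum]
      apply Finset.sum_congr rfl; intro c _
      rw [hconf x c b]; ring
    rw [hr] at h0
    have h2 := congrArg (fun t => V x * t) h0
    rw [← mul_assoc, mul_inv_cancel₀ hVne, one_mul] at h2
    rw [h2, mul_ite, mul_one, mul_zero]
  calc M'.ginv x a b
      = ∑ c, M'.ginv x a c * (if c = b then (1:ℝ) else 0) := by simp
    _ = ∑ c, M'.ginv x a c * (∑ d, M.g x c d * M.ginv x d b) := by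
        apply Finset.sum_congr rfl; intro c _; rw [invr M x c b]
    _ = ∑ c, ∑ d, M'.ginv x a c * M.g x c d * M.ginv x d b := by
        apply Finset.sum_congr rfl; intro c _
        rw [Finset.mul_sum]; apply Finset.sum_congr rfl; intro d _; ring
    _ = ∑ d, (∑ c, M'.ginv x a c * M.g x c d) * M.ginv x d b := by
        rw [Finset.sum_comm]
        apply Finset.sum_congr rfl; intro d _
        rw [Finset.sum_mul]
    _ = ∑ d, (if a = d then V x else 0) * M.ginv x d b := by
        apply Finset.sum_congr rfl; intro d _; rw [h1 a d]
    _ = V x * M.ginv x a b := by simp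

include hV hVpos hconf in
lemma pdg_conf (x : Fin n → ℝ) (i a b : Fin n) :
    pd i (fun y => M'.g y a b) x
      = (V x)⁻¹ * pd i (fun y => M.g y a b) x - pd i V x / (V x) ^ 2 * M.g x a b := by
  have hVne : ∀ y, V y ≠ 0 := fun y => ne_of_gt (hVpos y)
  have hfun : (fun y => M'.g y a b) = fun y => (V y)⁻¹ * M.g y a b := by
    funext y; exact hconf y a b
  rw [hfun]
  have hdV : DifferentiableAt ℝ V x :=
    (hV.differentiable (by simp)).differentiableAt
  have hdVi : DifferentiableAt ℝ (fun y => (V y)⁻¹) x := hdV.inv (hVne x)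
  have hdg : DifferentiableAt ℝ (fun y => M.g y a b) x :=
    ((M.smooth_g a b).differentiable (by simp)).differentiableAt
  rw [pd_mul i hdVi hdg, pd_inv i hdV hVne]
  ring

include hV hVpos hconf in
lemma Γ_conf (x : Fin n → ℝ) (a b c : Fin n) :
    M'.Γ x a b c = M.Γ x a b c + ΔΓ M V x a b c := by
  have hVne : V x ≠ 0 := ne_of_gt (hVpos x)
  have key : ∀ d : Fin n, M'.ginv x a d *
      (pd b (fun y => M'.g y d c) x + pd c (fun y => M'.g y d b) x
        - pd d (fun y => M'.g y b c) x)
      = M.ginv x a d *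
        (pd b (fun y => M.g y d c) x + pd c (fun y => M.g y d b) x
          - pd d (fun y => M.g y b c) x)
        - (1 / V x) * (pd b V x * (M.ginv x a d * M.g x d c)
          + pd c V x * (M.ginv x a d * M.g x d b)
          - M.g x b c * (M.ginv x a d * pd d V x)) := by
    intro d
    rw [ginv_conf M M' V hVpos hconf x a d,
      pdg_conf M M' V hV hVpos hconf x b d c,
      pdg_conf M M' V hV hVpos hconf x c d b,
      pdg_conf M M' V hV hVpos hconf x d b c]
    field_simp
    ring
  have hsum : ∑ d, (pd b V x * (M.ginv x a d * M.g x d c)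
        + pd c V x * (M.ginv x a d * M.g x d b)
        - M.g x b c * (M.ginv x a d * pd d V x))
      = pd b V x * (if a = c then (1:ℝ) else 0)
        + pd c V x * (if a = b then (1:ℝ) else 0)
        - M.g x b c * ∑ e, M.ginv x a e * pd e V x := by
    rw [Finset.sum_sub_distrib, Finset.sum_add_distrib,
      ← Finset.mul_sum, ← Finset.mul_sum, ← Finset.mul_sum,
      M.invl x a c, M.invl x a b]
  show (1/2) * ∑ d, M'.ginv x a d * _ = _
  rw [Finset.sum_congr rfl (fun d _ => key d), Finset.sum_sub_distrib,
    ← Finset.mul_sum, hsum]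
  show _ = (1/2) * ∑ d, M.ginv x a d * _ + ΔΓ M V x a b c
  unfold ΔΓ
  field_simp
  ring

end Conf
end BD
namespace BD
variable {n : ℕ}

/-- `W_a = g^{bc} ∂_b V K̂_{ca}`. -/
def Wf (M : PseudoRiemMetric n) (V : (Fin n → ℝ) → ℝ)
    (Khat : (Fin n → ℝ) → Fin n → Fin n → ℝ) (x : Fin n → ℝ) (a : Fin n) : ℝ :=
  ∑ b, ∑ c, M.ginv x b c * pd b V x * Khat x c a

/-- `ĝ`-trace of `K̂` divided by `n`. -/
def τf (M : PseudoRiemMetric n) (V : (Fin n → ℝ) → ℝ)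
    (Khat : (Fin n → ℝ) → Fin n → Fin n → ℝ) (x : Fin n → ℝ) : ℝ :=
  (1 / (n : ℝ)) * ∑ p, ∑ q, (V x * M.ginv x p q) * Khat x p q

def νf (M : PseudoRiemMetric n) (V : (Fin n → ℝ) → ℝ)
    (Khat : (Fin n → ℝ) → Fin n → Fin n → ℝ) (mu : (Fin n → ℝ) → ℝ)
    (x : Fin n → ℝ) : ℝ :=
  mu x - V x * τf M V Khat x

section Main

variable (M M' : PseudoRiemMetric n) (V : (Fin n → ℝ) → ℝ)
  (Khat : (Fin n → ℝ) → Fin n → Fin n → ℝ) (mu : (Fin n → ℝ) → ℝ)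

variable (hV : ContDiff ℝ (⊤ : ℕ∞) V) (hVpos : ∀ x, 0 < V x)
  (hconf : ∀ x a b, M'.g x a b = (V x)⁻¹ * M.g x a b)
  (hKhat_symm : ∀ x a b, Khat x a b = Khat x b a)
  (hKhat_smooth : ∀ a b, ContDiff ℝ (⊤ : ℕ∞) fun x => Khat x a b)
  (hmu : ContDiff ℝ (⊤ : ℕ∞) mu)

include hV hKhat_smooth in
lemma sm_τ : Sm (τf M V Khat) := by
  apply Sm.mul (sm_const _)
  apply sm_sum
  intro p _
  apply sm_sum
  intro q _
  exact Sm.mul (Sm.mul hV (M.smooth_ginv p q)) (hKhat_smooth p q)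

include hV hKhat_smooth hmu in
lemma sm_ν : Sm (νf M V Khat mu) :=
  Sm.sub hmu (Sm.mul hV (sm_τ M V Khat hV hKhat_smooth))

include hV hVpos hconf in
/-- Conformal change of the covariant derivative of a 2-tensor. -/
lemma covD2_conf_k (x : Fin n → ℝ) (a b c : Fin n) :
    M'.covD2 Khat x a b c = M.covD2 Khat x a b c
      - (∑ d, ΔΓ M V x d a b * Khat x d c)
      - ∑ d, ΔΓ M V x d a c * Khat x b d := by
  unfold PseudoRiemMetric.covD2
  have h1 : ∑ d, M'.Γ x d a b * Khat x d c
      = (∑ d, M.Γ x d a b * Khat x d c) + ∑ d, ΔΓ M V x d a b * Khat x d c := by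
    rw [← Finset.sum_add_distrib]
    apply Finset.sum_congr rfl; intro d _
    rw [Γ_conf M M' V hV hVpos hconf x d a b]; ring
  have h2 : ∑ d, M'.Γ x d a c * Khat x b d
      = (∑ d, M.Γ x d a c * Khat x b d) + ∑ d, ΔΓ M V x d a c * Khat x b d := by
    rw [← Finset.sum_add_distrib]
    apply Finset.sum_congr rfl; intro d _
    rw [Γ_conf M M' V hV hVpos hconf x d a c]; ring
  rw [h1, h2]; ring

lemma ΔΓ_contract1 (x : Fin n → ℝ) (a b c : Fin n) :
    ∑ d, ΔΓ M V x d a b * Khat x d c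
      = -(1 / (2 * V x)) * (pd b V x * Khat x a c + pd a V x * Khat x b c
          - M.g x a b * Wf M V Khat x c) := by
  have hWs : ∑ d, ((∑ e, M.ginv x d e * pd e V x) * Khat x d c) = Wf M V Khat x c := by
    unfold Wf
    rw [Finset.sum_comm]
    apply Finset.sum_congr rfl; intro d _
    rw [Finset.sum_mul]
    apply Finset.sum_congr rfl; intro e _
    rw [ginv_symm M x e d]
  have expand : ∀ d, ΔΓ M V x d a b * Khat x d c
      = -(1 / (2 * V x)) * ((if d = a then (1:ℝ) else 0) * (pd b V x * Khat x d c)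
        + (if d = b then (1:ℝ) else 0) * (pd a V x * Khat x d c)
        - M.g x a b * ((∑ e, M.ginv x d e * pd e V x) * Khat x d c)) := by
    intro d; unfold ΔΓ; ring
  rw [Finset.sum_congr rfl (fun d _ => expand d), ← Finset.mul_sum,
    Finset.sum_sub_distrib, Finset.sum_add_distrib, ← Finset.mul_sum, hWs]
  have hita : ∑ d, (if d = a then (1:ℝ) else 0) * (pd b V x * Khat x d c)
      = pd b V x * Khat x a c := by simp
  have hitb : ∑ d, (if d = b then (1:ℝ) else 0) * (pd a V x * Khat x d c)
      = pd a V x * Khat x b c := by simp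
  rw [hita, hitb]

include hKhat_symm in
lemma ΔΓ_contract2 (x : Fin n → ℝ) (a b c : Fin n) :
    ∑ d, ΔΓ M V x d a c * Khat x b d
      = -(1 / (2 * V x)) * (pd c V x * Khat x a b + pd a V x * Khat x c b
          - M.g x a c * Wf M V Khat x b) := by
  have h : ∀ d, ΔΓ M V x d a c * Khat x b d = ΔΓ M V x d a c * Khat x d b := by
    intro d; rw [hKhat_symm x b d]
  rw [Finset.sum_congr rfl (fun d _ => h d), ΔΓ_contract1 M V Khat x a c b]

include hV hVpos hKhat_smooth hmu in
lemma covD2_Kg (x : Fin n → ℝ) (a b c : Fin n) :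
    M.covD2 (fun y p q => V y ^ 2 * Khat y p q + νf M V Khat mu y * M.g y p q) x a b c
      = (V x) ^ 2 * M.covD2 Khat x a b c + 2 * V x * pd a V x * Khat x b c
        + pd a (νf M V Khat mu) x * M.g x b c := by
  have hdV : DifferentiableAt ℝ V x :=
    (hV.differentiable (by simp)).differentiableAt
  have hdK : ∀ p q, DifferentiableAt ℝ (fun y => Khat y p q) x := fun p q =>
    ((hKhat_smooth p q).differentiable (by simp)).differentiableAt
  have hdg : ∀ p q, DifferentiableAt ℝ (fun y => M.g y p q) x := fun p q =>
    ((M.smooth_g p q).differentiable (by simp)).differentiableAt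
  have hsmν : Sm (νf M V Khat mu) := sm_ν M V Khat mu hV hKhat_smooth hmu
  have hdν : DifferentiableAt ℝ (νf M V Khat mu) x := hsmν.diff x
  have hdV2 : DifferentiableAt ℝ (fun y => V y ^ 2) x := hdV.pow 2
  have hpdV2 : pd a (fun y => V y ^ 2) x = 2 * V x * pd a V x := by
    have hfun : (fun y => V y ^ 2) = fun y => V y * V y := by funext y; ring
    rw [hfun, pd_mul a hdV hdV]; ring
  have hpd : pd a (fun y => V y ^ 2 * Khat y b c + νf M V Khat mu y * M.g y b c) x
      = 2 * V x * pd a V x * Khat x b c + (V x) ^ 2 * pd a (fun y => Khat y b c) x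
        + pd a (νf M V Khat mu) x * M.g x b c
        + νf M V Khat mu x * pd a (fun y => M.g y b c) x := by
    rw [pd_add a (hdV2.fun_mul (hdK b c)) (hdν.fun_mul (hdg b c)),
      pd_mul a hdV2 (hdK b c), pd_mul a hdν (hdg b c), hpdV2]
    ring
  have hsum : ∀ (p q s : Fin n),
      ∑ d, M.Γ x d p q * (V x ^ 2 * Khat x d s + νf M V Khat mu x * M.g x d s)
        = (V x) ^ 2 * (∑ d, M.Γ x d p q * Khat x d s)
          + νf M V Khat mu x * ∑ d, M.Γ x d p q * M.g x d s := by
    intro p q s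
    rw [Finset.mul_sum, Finset.mul_sum, ← Finset.sum_add_distrib]
    apply Finset.sum_congr rfl; intro d _; ring
  have hsum2 : ∑ d, M.Γ x d a c * (V x ^ 2 * Khat x b d + νf M V Khat mu x * M.g x b d)
      = (V x) ^ 2 * (∑ d, M.Γ x d a c * Khat x b d)
        + νf M V Khat mu x * ∑ d, M.Γ x d a c * M.g x b d := by
    rw [Finset.mul_sum, Finset.mul_sum, ← Finset.sum_add_distrib]
    apply Finset.sum_congr rfl; intro d _; ring
  have hg0 := covD2_g_zero M x a b c
  unfold PseudoRiemMetric.covD2 at hg0 ⊢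
  rw [hpd, hsum a b c, hsum2]
  linear_combination (νf M V Khat mu x) * hg0

end Main
end BD
namespace BD
variable {n : ℕ}

section Contr
variable (M : PseudoRiemMetric n) (x : Fin n → ℝ)

lemma tr_gginv : ∑ b, ∑ c, M.ginv x b c * M.g x b c = (n : ℝ) := by
  have h : ∀ b : Fin n, ∑ c, M.ginv x b c * M.g x b c = 1 := by
    intro b
    have h1 : ∑ c, M.ginv x b c * M.g x b c = ∑ c, M.ginv x b c * M.g x c b := by
      apply Finset.sum_congr rfl; intro c _; rw [M.symm x b c]
    rw [h1, M.invl x b b]; simp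
  rw [Finset.sum_congr rfl (fun b _ => h b)]
  simp [Finset.card_univ]

lemma contract_c1 (u : Fin n → ℝ) (a : Fin n) :
    ∑ b, ∑ c, M.ginv x b c * (M.g x a b * u c) = u a := by
  rw [Finset.sum_comm]
  have h : ∀ c : Fin n, ∑ b, M.ginv x b c * (M.g x a b * u c)
      = (if a = c then (1:ℝ) else 0) * u c := by
    intro c
    have h1 : ∑ b, M.ginv x b c * (M.g x a b * u c)
        = (∑ b, M.g x a b * M.ginv x b c) * u c := by
      rw [Finset.sum_mul]; apply Finset.sum_congr rfl; intro b _; ring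
    rw [h1, invr M x a c]
  rw [Finset.sum_congr rfl (fun c _ => h c)]
  simp

lemma contract_c2 (u : Fin n → ℝ) (a : Fin n) :
    ∑ b, ∑ c, M.ginv x b c * (M.g x c a * u b) = u a := by
  have h : ∀ b : Fin n, ∑ c, M.ginv x b c * (M.g x c a * u b)
      = (if b = a then (1:ℝ) else 0) * u b := by
    intro b
    have h1 : ∑ c, M.ginv x b c * (M.g x c a * u b)
        = (∑ c, M.ginv x b c * M.g x c a) * u b := by
      rw [Finset.sum_mul]; apply Finset.sum_congr rfl; intro c _; ring
    rw [h1, M.invl x b a]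
  rw [Finset.sum_congr rfl (fun b _ => h b)]
  simp

end Contr

section Final

variable (M M' : PseudoRiemMetric n) (V : (Fin n → ℝ) → ℝ)
  (Khat : (Fin n → ℝ) → Fin n → Fin n → ℝ) (mu : (Fin n → ℝ) → ℝ)
  (k : (Fin n → ℝ) → Fin n → Fin n → ℝ)

variable (hV : ContDiff ℝ (⊤ : ℕ∞) V) (hVpos : ∀ x, 0 < V x)
  (hconf : ∀ x a b, M'.g x a b = (V x)⁻¹ * M.g x a b)
  (hKhat_symm : ∀ x a b, Khat x a b = Khat x b a)
  (hKhat_smooth : ∀ a b, ContDiff ℝ (⊤ : ℕ∞) fun x => Khat x a b)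
  (hKhat_killing : ∀ x a b c,
      M'.covD2 Khat x a b c + M'.covD2 Khat x b c a + M'.covD2 Khat x c a b = 0)
  (hmu : ContDiff ℝ (⊤ : ℕ∞) mu)
  (hk : ∀ x a b, k x a b
      = Khat x a b
        - ((1 / (n : ℝ)) * ∑ p, ∑ q, (V x * M.ginv x p q) * Khat x p q) * M'.g x a b)
  (hmuK : ∀ x a b c,
      M.covD2 (fun y p q => (V y) ^ 2 * k y p q + mu y * M.g y p q) x a b c
        + M.covD2 (fun y p q => (V y) ^ 2 * k y p q + mu y * M.g y p q) x b c a
        + M.covD2 (fun y p q => (V y) ^ 2 * k y p q + mu y * M.g y p q) x c a b = 0)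

include hVpos hconf hk in
lemma funKg : (fun y p q => (V y) ^ 2 * k y p q + mu y * M.g y p q)
    = fun y p q => V y ^ 2 * Khat y p q + νf M V Khat mu y * M.g y p q := by
  funext y p q
  rw [hk y p q, hconf y p q]
  unfold νf τf
  have hVne : V y ≠ 0 := ne_of_gt (hVpos y)
  have hVV : (V y) ^ 2 * (V y)⁻¹ = V y := by
    rw [sq, mul_inv_cancel_right₀ hVne]
  linear_combination (-((1 / (n : ℝ) * ∑ p, ∑ q, V y * M.ginv y p q * Khat y p q)
    * M.g y p q)) * hVV

include hV hVpos hconf hKhat_symm hKhat_smooth hKhat_killing hmu hk hmuK in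
lemma key (x : Fin n → ℝ) (a : Fin n) :
    V x * Wf M V Khat x a + pd a (νf M V Khat mu) x = 0 := by
  have E3 : ∀ a b c : Fin n,
      V x * (M.g x a b * Wf M V Khat x c + M.g x b c * Wf M V Khat x a
          + M.g x c a * Wf M V Khat x b)
        + (pd a (νf M V Khat mu) x * M.g x b c + pd b (νf M V Khat mu) x * M.g x c a
          + pd c (νf M V Khat mu) x * M.g x a b) = 0 := by
    intro a b c
    have h1 := hKhat_killing x a b c
    rw [covD2_conf_k M M' V Khat hV hVpos hconf x a b c,
      covD2_conf_k M M' V Khat hV hVpos hconf x b c a,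
      covD2_conf_k M M' V Khat hV hVpos hconf x c a b,
      ΔΓ_contract1 M V Khat x a b c, ΔΓ_contract1 M V Khat x b c a,
      ΔΓ_contract1 M V Khat x c a b,
      ΔΓ_contract2 M V Khat hKhat_symm x a b c,
      ΔΓ_contract2 M V Khat hKhat_symm x b c a,
      ΔΓ_contract2 M V Khat hKhat_symm x c a b] at h1
    have h2 := hmuK x a b c
    rw [funKg M M' V Khat mu k hVpos hconf hk] at h2
    rw [covD2_Kg M V Khat mu hV hVpos hKhat_smooth hmu x a b c,
      covD2_Kg M V Khat mu hV hVpos hKhat_smooth hmu x b c a,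
      covD2_Kg M V Khat mu hV hVpos hKhat_smooth hmu x c a b] at h2
    simp only [hKhat_symm x a c, hKhat_symm x c b, hKhat_symm x b a,
      M.symm x a c, M.symm x b a, M.symm x c b] at h1 h2
    have hVV : (V x) ^ 2 * (V x)⁻¹ = V x := by
      rw [sq, mul_inv_cancel_right₀ (ne_of_gt (hVpos x))]
    linear_combination h2 - (V x) ^ 2 * h1
      + (2 * (pd a V x * Khat x b c + pd b V x * Khat x c a + pd c V x * Khat x a b)
        - (M.g x a b * Wf M V Khat x c + M.g x b c * Wf M V Khat x a
          + M.g x c a * Wf M V Khat x b)) * hVV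
  have hc : ∑ b, ∑ c, M.ginv x b c *
      (V x * (M.g x a b * Wf M V Khat x c + M.g x b c * Wf M V Khat x a
          + M.g x c a * Wf M V Khat x b)
        + (pd a (νf M V Khat mu) x * M.g x b c + pd b (νf M V Khat mu) x * M.g x c a
          + pd c (νf M V Khat mu) x * M.g x a b)) = 0 := by
    refine Finset.sum_eq_zero fun b _ => Finset.sum_eq_zero fun c _ => ?_
    rw [E3 a b c, mul_zero]
  have hsplit : ∑ b, ∑ c, M.ginv x b c *
      (V x * (M.g x a b * Wf M V Khat x c + M.g x b c * Wf M V Khat x a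
          + M.g x c a * Wf M V Khat x b)
        + (pd a (νf M V Khat mu) x * M.g x b c + pd b (νf M V Khat mu) x * M.g x c a
          + pd c (νf M V Khat mu) x * M.g x a b))
      = V x * (∑ b, ∑ c, M.ginv x b c * (M.g x a b * Wf M V Khat x c))
        + (V x * Wf M V Khat x a + pd a (νf M V Khat mu) x)
            * (∑ b, ∑ c, M.ginv x b c * M.g x b c)
        + V x * (∑ b, ∑ c, M.ginv x b c * (M.g x c a * Wf M V Khat x b))
        + (∑ b, ∑ c, M.ginv x b c * (M.g x c a * pd b (νf M V Khat mu) x))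
        + (∑ b, ∑ c, M.ginv x b c * (M.g x a b * pd c (νf M V Khat mu) x)) := by
    simp only [Finset.mul_sum, ← Finset.sum_add_distrib]
    apply Finset.sum_congr rfl; intro b _
    apply Finset.sum_congr rfl; intro c _
    ring
  rw [hsplit, contract_c1 M x (Wf M V Khat x) a, contract_c2 M x (Wf M V Khat x) a,
    tr_gginv M x, contract_c2 M x (fun b => pd b (νf M V Khat mu) x) a,
    contract_c1 M x (fun c => pd c (νf M V Khat mu) x) a] at hc
  have hn2 : ((n : ℝ) + 2) ≠ 0 := by positivity
  have : ((n : ℝ) + 2) * (V x * Wf M V Khat x a + pd a (νf M V Khat mu) x) = 0 := by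
    linear_combination hc
  exact (mul_eq_zero.mp this).resolve_left hn2

end Final
end BD
/-- Bertrand–Darboux / dKdV: let `ĝ = V⁻¹ g`, let `K̂` be a
Killing tensor for `ĝ` with (`ĝ`-)trace-free part `k`, and suppose there is a
Killing tensor for `g` whose (weighted) trace-free part is also `k`
(i.e. equals `V² k + μ g` for some function `μ`). Then the one-form
`ω_a = K̂^b{}_a (dV)_b` (index raised with `ĝ`) is closed. -/
theorem bertrand_darboux {n : ℕ} (hn : 1 ≤ n) (M M' : PseudoRiemMetric n)
    (V : (Fin n → ℝ) → ℝ) (hV : ContDiff ℝ (⊤ : ℕ∞) V) (hVpos : ∀ x, 0 < V x)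
    (hconf : ∀ x a b, M'.g x a b = (V x)⁻¹ * M.g x a b)
    (Khat : (Fin n → ℝ) → Fin n → Fin n → ℝ)
    (hKhat_symm : ∀ x a b, Khat x a b = Khat x b a)
    (hKhat_smooth : ∀ a b, ContDiff ℝ (⊤ : ℕ∞) fun x => Khat x a b)
    (hKhat_killing : ∀ x a b c,
      M'.covD2 Khat x a b c + M'.covD2 Khat x b c a + M'.covD2 Khat x c a b = 0)
    (k : (Fin n → ℝ) → Fin n → Fin n → ℝ)
    (hk : ∀ x a b, k x a b
      = Khat x a b
        - ((1 / (n : ℝ)) * ∑ p, ∑ q, (V x * M.ginv x p q) * Khat x p q) * M'.g x a b)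
    (hg_killing : ∃ mu : (Fin n → ℝ) → ℝ, ContDiff ℝ (⊤ : ℕ∞) mu ∧
      ∀ x a b c,
        M.covD2 (fun y p q => (V y) ^ 2 * k y p q + mu y * M.g y p q) x a b c
          + M.covD2 (fun y p q => (V y) ^ 2 * k y p q + mu y * M.g y p q) x b c a
          + M.covD2 (fun y p q => (V y) ^ 2 * k y p q + mu y * M.g y p q) x c a b = 0) :
    ∀ x a e,
      pd e (fun y => ∑ b, ∑ c, (V y * M.ginv y b c) * Khat y c a * pd b V y) x
        = pd a (fun y => ∑ b, ∑ c, (V y * M.ginv y b c) * Khat y c e * pd b V y) x := by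
  obtain ⟨mu, hmu, hmuK⟩ := hg_killing
  intro x a e
  have hω : ∀ i : Fin n, (fun y => ∑ b, ∑ c, (V y * M.ginv y b c) * Khat y c i * pd b V y)
      = fun y => -(pd i (BD.νf M V Khat mu) y) := by
    intro i; funext y
    have hkey := BD.key M M' V Khat mu k hV hVpos hconf hKhat_symm hKhat_smooth
      hKhat_killing hmu hk hmuK y i
    have hW : ∑ b, ∑ c, (V y * M.ginv y b c) * Khat y c i * pd b V y
        = V y * BD.Wf M V Khat y i := by
      unfold BD.Wf
      rw [Finset.mul_sum]
      apply Finset.sum_congr rfl; intro b _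
      rw [Finset.mul_sum]
      apply Finset.sum_congr rfl; intro c _
      ring
    rw [hW]; linarith [hkey]
  rw [hω a, hω e, BD.pd_neg, BD.pd_neg]
  have hsν : BD.Sm (BD.νf M V Khat mu) := BD.sm_ν M V Khat mu hV hKhat_smooth hmu
  exact congrArg Neg.neg (BD.pd_comm hsν x e a)
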